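/- The number of permutations of length n avoiding 213 and 231 and containing the pattern 123 exactly once equals n − 2 for n ≥ 3 (generating function x³/(1−x)²), and the same count holds for the pattern 321. -/

import Mathlib

/-- An occurrence of the pattern `τ` (of length `k`) in the permutation `π` (of length `n`)
is a strictly increasing map of positions along which `π` is order-isomorphic to `τ`. -/
def IsOcc {k n : ℕ} (τ : Fin k → Fin k) (π : Fin n → Fin n) (f : Fin k → Fin n) : Prop :=
  StrictMono f ∧ ∀ i j : Fin k, τ i < τ j ↔ π (f i) < π (f j)

/-- `π` avoids the pattern `τ`. -/
def Avoids {k n : ℕ} (τ : Fin k → Fin k) (π : Fin n → Fin n) : Prop :=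
  ¬ ∃ f, IsOcc τ π f

/-- `π` contains exactly one occurrence of the pattern `τ`. -/
def ContainsOnce {k n : ℕ} (τ : Fin k → Fin k) (π : Fin n → Fin n) : Prop :=
  ∃! f, IsOcc τ π f

def p123 : Fin 3 → Fin 3 := ![0, 1, 2]
def p132 : Fin 3 → Fin 3 := ![0, 2, 1]
def p213 : Fin 3 → Fin 3 := ![1, 0, 2]
def p231 : Fin 3 → Fin 3 := ![1, 2, 0]
def p312 : Fin 3 → Fin 3 := ![2, 0, 1]
def p321 : Fin 3 → Fin 3 := ![2, 1, 0]

variable {n : ℕ}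

def MinAt (π : Fin n → Fin n) (i : Fin n) : Prop := ∀ j, i < j → π i < π j
def MaxAt (π : Fin n → Fin n) (i : Fin n) : Prop := ∀ j, i < j → π j < π i

lemma strictMono_vec3 {a b c : Fin n} (hab : a < b) (hbc : b < c) :
    StrictMono ![a, b, c] := by
  intro i j hij
  fin_cases i <;> fin_cases j <;>
    first
      | exact absurd hij (by decide)
      | simpa using hab
      | simpa using hbc
      | simpa using hab.trans hbc

lemma rev_p123 : Fin.rev ∘ p123 = p321 := by
  funext i; fin_cases i <;> decide

lemma rev_p213 : Fin.rev ∘ p213 = p231 := by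
  funext i; fin_cases i <;> decide

lemma isOcc_rev {k : ℕ} {τ : Fin k → Fin k} {π : Fin n → Fin n} {f : Fin k → Fin n} :
    IsOcc τ (Fin.rev ∘ π) f ↔ IsOcc (Fin.rev ∘ τ) π f := by
  constructor
  · rintro ⟨hm, h⟩
    refine ⟨hm, fun i j => ?_⟩
    simp only [Function.comp_apply, Fin.rev_lt_rev] at h ⊢
    exact h j i
  · rintro ⟨hm, h⟩
    refine ⟨hm, fun i j => ?_⟩
    simp only [Function.comp_apply, Fin.rev_lt_rev] at h ⊢
    exact h j i

lemma occ3_iff {τ : Fin 3 → Fin 3} {u : Fin 3 → Fin n} :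
    (∀ i j : Fin 3, τ i < τ j ↔ u i < u j) ↔
    ((τ 0 < τ 1 ↔ u 0 < u 1) ∧ (τ 1 < τ 0 ↔ u 1 < u 0) ∧
     (τ 0 < τ 2 ↔ u 0 < u 2) ∧ (τ 2 < τ 0 ↔ u 2 < u 0) ∧
     (τ 1 < τ 2 ↔ u 1 < u 2) ∧ (τ 2 < τ 1 ↔ u 2 < u 1)) := by
  constructor
  · intro h; exact ⟨h 0 1, h 1 0, h 0 2, h 2 0, h 1 2, h 2 1⟩
  · rintro ⟨a, b, c, d, e, f⟩ i j
    fin_cases i <;> fin_cases j <;>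
      first
        | exact a | exact b | exact c | exact d | exact e | exact f
        | simp

lemma isOcc_p213_mk {π : Fin n → Fin n} {a b c : Fin n} (hab : a < b) (hbc : b < c)
    (h1 : π b < π a) (h2 : π a < π c) : IsOcc p213 π ![a, b, c] := by
  have h3 : π b < π c := h1.trans h2
  exact ⟨strictMono_vec3 hab hbc, occ3_iff.mpr
    ⟨iff_of_false (by decide) (asymm h1), iff_of_true (by decide) h1,
     iff_of_true (by decide) h2, iff_of_false (by decide) (asymm h2),
     iff_of_true (by decide) h3, iff_of_false (by decide) (asymm h3)⟩⟩

lemma isOcc_p231_mk {π : Fin n → Fin n} {a b c : Fin n} (hab : a < b) (hbc : b < c)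
    (h1 : π a < π b) (h2 : π c < π a) : IsOcc p231 π ![a, b, c] := by
  have h3 : π c < π b := h2.trans h1
  exact ⟨strictMono_vec3 hab hbc, occ3_iff.mpr
    ⟨iff_of_true (by decide) h1, iff_of_false (by decide) (asymm h1),
     iff_of_false (by decide) (asymm h2), iff_of_true (by decide) h2,
     iff_of_false (by decide) (asymm h3), iff_of_true (by decide) h3⟩⟩

lemma isOcc_p123_iff {π : Fin n → Fin n} {f : Fin 3 → Fin n} :
    IsOcc p123 π f ↔ StrictMono f ∧ π (f 0) < π (f 1) ∧ π (f 1) < π (f 2) := by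
  constructor
  · rintro ⟨hm, h⟩
    exact ⟨hm, (h 0 1).1 (by decide), (h 1 2).1 (by decide)⟩
  · rintro ⟨hm, h01, h12⟩
    have h02 : π (f 0) < π (f 2) := h01.trans h12
    exact ⟨hm, occ3_iff.mpr
      ⟨iff_of_true (by decide) h01, iff_of_false (by decide) (asymm h01),
       iff_of_true (by decide) h02, iff_of_false (by decide) (asymm h02),
       iff_of_true (by decide) h12, iff_of_false (by decide) (asymm h12)⟩⟩

lemma steps_of_avoids {π : Fin n → Fin n} (hinj : Function.Injective π)
    (h213 : ¬ ∃ f, IsOcc p213 π f) (h231 : ¬ ∃ f, IsOcc p231 π f) (i : Fin n) :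
    MinAt π i ∨ MaxAt π i := by
  by_contra hc
  push_neg at hc
  obtain ⟨h1, h2⟩ := hc
  simp only [MinAt, MaxAt, not_forall, not_lt] at h1 h2
  obtain ⟨j, hij, hj⟩ := h1
  obtain ⟨k, hik, hk⟩ := h2
  have hji : π j < π i := lt_of_le_of_ne hj (fun h => hij.ne (hinj h).symm)
  have hik' : π i < π k := lt_of_le_of_ne hk (fun h => hik.ne (hinj h))
  rcases lt_trichotomy j k with h | h | h
  · exact h213 ⟨![i, j, k], isOcc_p213_mk hij h hji hik'⟩
  · exact absurd (h ▸ (hji.trans hik')) (lt_irrefl _)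
  · exact h231 ⟨![i, k, j], isOcc_p231_mk hik h hik' hji⟩

lemma avoids_of_steps {π : Fin n → Fin n} (hS : ∀ i, MinAt π i ∨ MaxAt π i) :
    (¬ ∃ f, IsOcc p213 π f) ∧ (¬ ∃ f, IsOcc p231 π f) := by
  constructor
  · rintro ⟨f, hm, h⟩
    have h10 : π (f 1) < π (f 0) := (h 1 0).1 (by decide)
    have h02 : π (f 0) < π (f 2) := (h 0 2).1 (by decide)
    rcases hS (f 0) with hmin | hmax
    · exact absurd (hmin (f 1) (hm (by decide))) (asymm h10)
    · exact absurd (hmax (f 2) (hm (by decide))) (asymm h02)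
  · rintro ⟨f, hm, h⟩
    have h01 : π (f 0) < π (f 1) := (h 0 1).1 (by decide)
    have h20 : π (f 2) < π (f 0) := (h 2 0).1 (by decide)
    rcases hS (f 0) with hmin | hmax
    · exact absurd (hmin (f 2) (hm (by decide))) (asymm h20)
    · exact absurd (hmax (f 1) (hm (by decide))) (asymm h01)

lemma isOcc_p123_iff_min {π : Fin n → Fin n} (hS : ∀ i, MinAt π i ∨ MaxAt π i)
    {f : Fin 3 → Fin n} :
    IsOcc p123 π f ↔ StrictMono f ∧ MinAt π (f 0) ∧ MinAt π (f 1) := by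
  rw [isOcc_p123_iff]
  constructor
  · rintro ⟨hm, h01, h12⟩
    refine ⟨hm, ?_, ?_⟩
    · rcases hS (f 0) with h | h
      · exact h
      · exact absurd (h (f 1) (hm (by decide))) (asymm h01)
    · rcases hS (f 1) with h | h
      · exact h
      · exact absurd (h (f 2) (hm (by decide))) (asymm h12)
  · rintro ⟨hm, h0, h1⟩
    exact ⟨hm, h0 (f 1) (hm (by decide)), h1 (f 2) (hm (by decide))⟩

lemma eq_of_minAt_iff {π π' : Fin n → Fin n} (hb : Function.Bijective π)
    (hb' : Function.Bijective π') (hS : ∀ i, MinAt π i ∨ MaxAt π i)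
    (hS' : ∀ i, MinAt π' i ∨ MaxAt π' i)
    (hmm : ∀ i, MinAt π i ↔ MinAt π' i) : π = π' := by
  have key : ∀ i j, π i < π j → π' i < π' j := by
    intro i j hlt
    rcases lt_trichotomy i j with hij | rfl | hji
    · rcases hS i with h | h
      · exact ((hmm i).1 h) j hij
      · exact absurd (h j hij) (asymm hlt)
    · exact absurd hlt (lt_irrefl _)
    · have hnm : ¬ MinAt π j := fun h => absurd (h i hji) (asymm hlt)
      rcases hS' j with h | h
      · exact absurd ((hmm j).2 h) hnm
      · exact h i hji
  have key2 : ∀ i j, π i < π j ↔ π' i < π' j := by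
    intro i j
    refine ⟨key i j, fun h => ?_⟩
    rcases lt_trichotomy (π i) (π j) with h' | h' | h'
    · exact h'
    · rcases hb.injective h' with rfl; exact absurd h (lt_irrefl _)
    · exact absurd (key j i h') (asymm h)
  set e := Equiv.ofBijective π hb with he
  have hsm : StrictMono (π' ∘ e.symm) := by
    intro u v huv
    have hu : π (e.symm u) = u := e.apply_symm_apply u
    have hv : π (e.symm v) = v := e.apply_symm_apply v
    exact (key2 _ _).1 (by rw [hu, hv]; exact huv)
  have hid : π' ∘ e.symm = id := by
    refine (hsm.range_inj strictMono_id).1 ?_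
    rw [Set.range_id, Set.range_eq_univ]
    exact hb'.surjective.comp e.symm.surjective
  funext i
  have : (π' ∘ e.symm) (π i) = id (π i) := by rw [hid]
  simpa [he] using this.symm

def gval (n a i : ℕ) : ℕ :=
  if i = a then 0 else if i = n - 2 then 1 else if i = n - 1 then 2
  else if i < a then n - 1 - i else n - i

def Fp (n a : ℕ) (i : Fin n) : Fin n :=
  ⟨gval n a i.val % n, Nat.mod_lt _ i.pos⟩

lemma gval_lt {n a i : ℕ} (hn : 3 ≤ n) (ha : a ≤ n - 3) (hi : i < n) : gval n a i < n := by
  unfold gval; split_ifs <;> omega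

lemma Fp_val {n a : ℕ} (hn : 3 ≤ n) (ha : a ≤ n - 3) (i : Fin n) :
    (Fp n a i).val = gval n a i.val := by
  simp [Fp, Nat.mod_eq_of_lt (gval_lt hn ha i.isLt)]

lemma injective_Fp {n a : ℕ} (hn : 3 ≤ n) (ha : a ≤ n - 3) :
    Function.Injective (Fp n a) := by
  intro i j h
  have h' : gval n a i.val = gval n a j.val := by
    rw [← Fp_val hn ha i, ← Fp_val hn ha j, h]
  have hi := i.isLt
  have hj := j.isLt
  apply Fin.ext
  unfold gval at h'
  split_ifs at h' <;> omega

lemma minAt_Fp {n a : ℕ} (hn : 3 ≤ n) (ha : a ≤ n - 3) {i : Fin n}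
    (h : i.val = a ∨ i.val = n - 2) : MinAt (Fp n a) i := by
  intro j hij
  rw [Fin.lt_def, Fp_val hn ha, Fp_val hn ha]
  have hij' : i.val < j.val := hij
  have hj := j.isLt
  unfold gval
  split_ifs <;> omega

lemma maxAt_Fp {n a : ℕ} (hn : 3 ≤ n) (ha : a ≤ n - 3) {i : Fin n}
    (h1 : i.val ≠ a) (h2 : i.val ≠ n - 2) (h3 : i.val ≠ n - 1) : MaxAt (Fp n a) i := by
  intro j hij
  rw [Fin.lt_def, Fp_val hn ha, Fp_val hn ha]
  have hij' : i.val < j.val := hij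
  have hj := j.isLt
  have hi := i.isLt
  unfold gval
  split_ifs <;> omega

lemma steps_Fp {n a : ℕ} (hn : 3 ≤ n) (ha : a ≤ n - 3) (i : Fin n) :
    MinAt (Fp n a) i ∨ MaxAt (Fp n a) i := by
  by_cases h1 : i.val = a
  · exact Or.inl (minAt_Fp hn ha (Or.inl h1))
  by_cases h2 : i.val = n - 2
  · exact Or.inl (minAt_Fp hn ha (Or.inr h2))
  by_cases h3 : i.val = n - 1
  · left; intro j hij
    exact absurd (h3 ▸ (show i.val < j.val from hij)) (by have := j.isLt; omega)
  · exact Or.inr (maxAt_Fp hn ha h1 h2 h3)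

lemma minAt_Fp_iff {n a : ℕ} (hn : 3 ≤ n) (ha : a ≤ n - 3) (i : Fin n) :
    MinAt (Fp n a) i ↔ (i.val = a ∨ i.val = n - 2 ∨ i.val = n - 1) := by
  constructor
  · intro h
    by_contra hc
    push_neg at hc
    obtain ⟨h1, h2, h3⟩ := hc
    have hlast : i < (⟨n - 1, by omega⟩ : Fin n) := by
      simp only [Fin.lt_def, Fin.val_mk]; have := i.isLt; omega
    exact absurd (maxAt_Fp hn ha h1 h2 h3 _ hlast) (asymm (h _ hlast))
  · rintro (h | h | h)
    · exact minAt_Fp hn ha (Or.inl h)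
    · exact minAt_Fp hn ha (Or.inr h)
    · intro j hij
      exact absurd (h ▸ (show i.val < j.val from hij)) (by have := j.isLt; omega)

lemma containsOnce_Fp {n a : ℕ} (hn : 3 ≤ n) (ha : a ≤ n - 3) :
    ∃! f, IsOcc p123 (Fp n a) f := by
  have hS := steps_Fp hn ha
  have haF : (⟨a, by omega⟩ : Fin n) < ⟨n - 2, by omega⟩ := by
    simp only [Fin.lt_def, Fin.val_mk]; omega
  have hbF : (⟨n - 2, by omega⟩ : Fin n) < ⟨n - 1, by omega⟩ := by
    simp only [Fin.lt_def, Fin.val_mk]; omega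
  refine ⟨![⟨a, by omega⟩, ⟨n - 2, by omega⟩, ⟨n - 1, by omega⟩], ?_, ?_⟩
  · simp only [isOcc_p123_iff_min hS]
    exact ⟨strictMono_vec3 haF hbF, minAt_Fp hn ha (Or.inl rfl),
      minAt_Fp hn ha (Or.inr rfl)⟩
  · intro f hf
    simp only [isOcc_p123_iff_min hS] at hf
    obtain ⟨hm, h0, h1⟩ := hf
    have h01 : f 0 < f 1 := hm (by decide)
    have h12 : f 1 < f 2 := hm (by decide)
    have h01' : (f 0).val < (f 1).val := h01
    have h12' : (f 1).val < (f 2).val := h12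
    have hf2 := (f 2).isLt
    have hv0 := (minAt_Fp_iff hn ha (f 0)).1 h0
    have hv1 := (minAt_Fp_iff hn ha (f 1)).1 h1
    have e0 : (f 0).val = a := by omega
    have e1 : (f 1).val = n - 2 := by omega
    have e2 : (f 2).val = n - 1 := by omega
    funext i
    fin_cases i
    · exact Fin.ext e0
    · exact Fin.ext e1
    · exact Fin.ext e2

lemma card123 (n : ℕ) (hn : 3 ≤ n) :
    Nat.card {π : Fin n → Fin n // Function.Bijective π ∧
        Avoids p213 π ∧ Avoids p231 π ∧ ContainsOnce p123 π} = n - 2 := by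
  have hmk : ∀ a : Fin (n - 2), a.val ≤ n - 3 := fun a => by have := a.isLt; omega
  set G : Fin (n - 2) → {π : Fin n → Fin n // Function.Bijective π ∧
      Avoids p213 π ∧ Avoids p231 π ∧ ContainsOnce p123 π} := fun a =>
    ⟨Fp n a.val,
      Finite.injective_iff_bijective.mp (injective_Fp hn (hmk a)),
      (avoids_of_steps (steps_Fp hn (hmk a))).1,
      (avoids_of_steps (steps_Fp hn (hmk a))).2,
      containsOnce_Fp hn (hmk a)⟩ with hG
  have hinj : Function.Injective G := by
    intro a b h
    have h' : Fp n a.val = Fp n b.val := congrArg Subtype.val h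
    have h2 := congrArg Fin.val (congrFun h' ⟨a.val, by have := a.isLt; omega⟩)
    rw [Fp_val hn (hmk a), Fp_val hn (hmk b)] at h2
    have ha := hmk a
    have hb := hmk b
    simp only [Fin.val_mk] at h2
    apply Fin.ext
    unfold gval at h2
    split_ifs at h2 <;> omega
  have hsurj : Function.Surjective G := by
    rintro ⟨π, hb, h1, h2, hco⟩
    have hS : ∀ i, MinAt π i ∨ MaxAt π i := steps_of_avoids hb.injective h1 h2
    obtain ⟨f, hf, huniq⟩ := hco
    rw [isOcc_p123_iff_min hS] at hf
    obtain ⟨hm, hmin0, hmin1⟩ := hf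
    have h01 : f 0 < f 1 := hm (by decide)
    have h12 : f 1 < f 2 := hm (by decide)
    have h01' : (f 0).val < (f 1).val := h01
    have h12' : (f 1).val < (f 2).val := h12
    have hf2 := (f 2).isLt
    -- f 2 is the last position
    have last : Fin n := ⟨n - 1, by omega⟩
    have hlast : f 2 = (⟨n - 1, by omega⟩ : Fin n) := by
      have hflt : f 1 < (⟨n - 1, by omega⟩ : Fin n) := by
        simp only [Fin.lt_def, Fin.val_mk]; omega
      have hocc : IsOcc p123 π ![f 0, f 1, ⟨n - 1, by omega⟩] := by
        rw [isOcc_p123_iff_min hS]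
        exact ⟨strictMono_vec3 h01 hflt, hmin0, hmin1⟩
      have := congrArg Fin.val (congrFun (huniq _ hocc) 2)
      exact Fin.ext (by simpa using this.symm)
    have hf2' : (f 2).val = n - 1 := congrArg Fin.val hlast
    -- f 1 is position n - 2
    have hf1' : (f 1).val = n - 2 := by
      by_contra hne
      have hflt1 : f 1 < (⟨n - 2, by omega⟩ : Fin n) := by
        simp only [Fin.lt_def, Fin.val_mk]; omega
      have hflt2 : (⟨n - 2, by omega⟩ : Fin n) < f 2 := by
        simp only [Fin.lt_def, Fin.val_mk]; omega
      have hocc : IsOcc p123 π ![f 0, f 1, ⟨n - 2, by omega⟩] := by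
        rw [isOcc_p123_iff_min hS]
        exact ⟨strictMono_vec3 h01 hflt1, hmin0, hmin1⟩
      have := congrArg Fin.val (congrFun (huniq _ hocc) 2)
      simp at this
      omega
    set a := (f 0).val with haval
    have ha : a ≤ n - 3 := by omega
    -- characterize MinAt π
    have hchar : ∀ i : Fin n, MinAt π i ↔ (i.val = a ∨ i.val = n - 2 ∨ i.val = n - 1) := by
      intro i
      constructor
      · intro hmin
        by_contra hc
        push_neg at hc
        obtain ⟨hc1, hc2, hc3⟩ := hc
        have hilt : i.val < n - 1 := by have := i.isLt; omega
        have hne0 : i ≠ f 0 := fun h => hc1 (by rw [h])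
        have hne1 : i ≠ f 1 := fun h => hc2 (by rw [h, hf1'])
        rcases lt_trichotomy i (f 0) with hlt | heq | hgt
        · have hocc : IsOcc p123 π ![i, f 0, f 1] := by
            rw [isOcc_p123_iff_min hS]
            exact ⟨strictMono_vec3 hlt h01, hmin, hmin0⟩
          have := congrFun (huniq _ hocc) 0
          simp at this
          exact hne0 this
        · exact hne0 heq
        · rcases lt_trichotomy i (f 1) with hlt1 | heq1 | hgt1
          · have hocc : IsOcc p123 π ![f 0, i, f 1] := by
              rw [isOcc_p123_iff_min hS]
              exact ⟨strictMono_vec3 hgt hlt1, hmin0, hmin⟩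
            have := congrFun (huniq _ hocc) 1
            simp at this
            exact hne1 this
          · exact hne1 heq1
          · have : (f 1).val < i.val := hgt1
            omega
      · rintro (h | h | h)
        · exact (Fin.ext (h.trans haval.symm) : i = f 0) ▸ hmin0
        · exact (Fin.ext (h.trans hf1'.symm) : i = f 1) ▸ hmin1
        · intro j hij
          have : i.val < j.val := hij
          have := j.isLt
          omega
    have hpi : π = Fp n a := by
      refine eq_of_minAt_iff hb
        (Finite.injective_iff_bijective.mp (injective_Fp hn ha)) hS (steps_Fp hn ha) ?_
      intro i
      rw [hchar i, minAt_Fp_iff hn ha i]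
    exact ⟨⟨a, by omega⟩, Subtype.ext hpi.symm⟩
  calc Nat.card {π : Fin n → Fin n // Function.Bijective π ∧
        Avoids p213 π ∧ Avoids p231 π ∧ ContainsOnce p123 π}
      = Nat.card (Fin (n - 2)) := (Nat.card_congr (Equiv.ofBijective G ⟨hinj, hsurj⟩)).symm
    _ = n - 2 := by simp

lemma rev_p231 : Fin.rev ∘ p231 = p213 := by
  funext i; fin_cases i <;> decide

lemma rev_p321 : Fin.rev ∘ p321 = p123 := by
  funext i; fin_cases i <;> decide

lemma mem_rev321 {n : ℕ} {π : Fin n → Fin n}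
    (h : Function.Bijective π ∧ Avoids p213 π ∧ Avoids p231 π ∧ ContainsOnce p321 π) :
    Function.Bijective (Fin.rev ∘ π) ∧ Avoids p213 (Fin.rev ∘ π) ∧
      Avoids p231 (Fin.rev ∘ π) ∧ ContainsOnce p123 (Fin.rev ∘ π) := by
  obtain ⟨hb, h1, h2, h3⟩ := h
  refine ⟨Fin.rev_involutive.bijective.comp hb, ?_, ?_, ?_⟩
  · rintro ⟨f, hf⟩
    exact h2 ⟨f, rev_p213 ▸ isOcc_rev.mp hf⟩
  · rintro ⟨f, hf⟩
    exact h1 ⟨f, rev_p231 ▸ isOcc_rev.mp hf⟩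
  · exact (existsUnique_congr fun f => isOcc_rev.trans (by rw [rev_p123])).mpr h3

lemma mem_rev123 {n : ℕ} {π : Fin n → Fin n}
    (h : Function.Bijective π ∧ Avoids p213 π ∧ Avoids p231 π ∧ ContainsOnce p123 π) :
    Function.Bijective (Fin.rev ∘ π) ∧ Avoids p213 (Fin.rev ∘ π) ∧
      Avoids p231 (Fin.rev ∘ π) ∧ ContainsOnce p321 (Fin.rev ∘ π) := by
  obtain ⟨hb, h1, h2, h3⟩ := h
  refine ⟨Fin.rev_involutive.bijective.comp hb, ?_, ?_, ?_⟩
  · rintro ⟨f, hf⟩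
    exact h2 ⟨f, rev_p213 ▸ isOcc_rev.mp hf⟩
  · rintro ⟨f, hf⟩
    exact h1 ⟨f, rev_p231 ▸ isOcc_rev.mp hf⟩
  · exact (existsUnique_congr fun f => isOcc_rev.trans (by rw [rev_p321])).mpr h3

lemma card321 (n : ℕ) :
    Nat.card {π : Fin n → Fin n // Function.Bijective π ∧
        Avoids p213 π ∧ Avoids p231 π ∧ ContainsOnce p321 π} =
    Nat.card {π : Fin n → Fin n // Function.Bijective π ∧
        Avoids p213 π ∧ Avoids p231 π ∧ ContainsOnce p123 π} := by
  refine Nat.card_congr ⟨fun p => ⟨Fin.rev ∘ p.1, mem_rev321 p.2⟩,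
    fun p => ⟨Fin.rev ∘ p.1, mem_rev123 p.2⟩, ?_, ?_⟩
  · intro p
    exact Subtype.ext (funext fun i => Fin.rev_rev _)
  · intro p
    exact Subtype.ext (funext fun i => Fin.rev_rev _)

/-- for `n ≥ 3`, `|Sₙ(213,231; 123)| = n − 2`, and the same holds for the
pattern `321`. -/
theorem stmt15 (n : ℕ) (hn : 3 ≤ n) :
    Nat.card {π : Fin n → Fin n // Function.Bijective π ∧
        Avoids p213 π ∧ Avoids p231 π ∧ ContainsOnce p123 π} = n - 2 ∧
    Nat.card {π : Fin n → Fin n // Function.Bijective π ∧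
        Avoids p213 π ∧ Avoids p231 π ∧ ContainsOnce p321 π} = n - 2 :=
  ⟨card123 n hn, (card321 n).trans (card123 n hn)⟩
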